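/- Let P ≠ Q be distributions on [d] with supp(P) ⊆ supp(Q), and let cₙ = (d·log₂(n+1))/n + C/n for a constant C > 0. If Xⁿ are i.i.d. from Q, then the type II error of Hoeffding's test, βₙ = Pr[D(Q̂ₙ‖P) ≤ cₙ], satisfies liminf_{n→∞} -(1/n)·log₂ βₙ ≥ D(P‖Q). -/

import Mathlib

open MeasureTheory Filter Finset
open scoped ENNReal

/-- `p` is a probability distribution on `Fin d`. -/
def IsProbDist {d : ℕ} (p : Fin d → ℝ) : Prop :=
  (∀ i, 0 ≤ p i) ∧ ∑ i, p i = 1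

/-- Base-2 Kullback–Leibler divergence (real-valued version, meaningful when
`supp p ⊆ supp q`), with the convention `0 · log(0/q) = 0`. -/
noncomputable def klDivReal {d : ℕ} (p q : Fin d → ℝ) : ℝ :=
  ∑ i, if p i = 0 then 0 else p i * Real.logb 2 (p i / q i)

/-- Base-2 Kullback–Leibler divergence, `+∞` when `supp p ⊄ supp q`. -/
noncomputable def klDiv {d : ℕ} (p q : Fin d → ℝ) : EReal :=
  if ∀ i, q i = 0 → p i = 0 then ((klDivReal p q : ℝ) : EReal) else ⊤

/-- Minimal nonzero entry of `p` (junk value `1` if there is none). -/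
noncomputable def minPos {d : ℕ} (p : Fin d → ℝ) : ℝ :=
  if h : (Finset.univ.filter fun i => 0 < p i).Nonempty
  then (Finset.univ.filter fun i => 0 < p i).inf' h p else 1

/-- The continuity modulus `g(p, ε) = 2 log₂(1/p_min) ε + (2√2/ln 2) √ε`. -/
noncomputable def gCont {d : ℕ} (p : Fin d → ℝ) (ε : ℝ) : ℝ :=
  2 * Real.logb 2 (1 / minPos p) * ε + (2 * Real.sqrt 2 / Real.log 2) * Real.sqrt ε

/-- The discrete measure on `Fin d` with mass `p i` at `i`. -/
noncomputable def discMeasure {d : ℕ} (p : Fin d → ℝ) : Measure (Fin d) :=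
  Measure.count.withDensity fun i => ENNReal.ofReal (p i)

instance discMeasure.isFiniteMeasure {d : ℕ} (p : Fin d → ℝ) :
    IsFiniteMeasure (discMeasure p) := by
  constructor
  rw [discMeasure, withDensity_apply _ MeasurableSet.univ,
    MeasureTheory.setLIntegral_univ, MeasureTheory.lintegral_count, tsum_fintype]
  exact ENNReal.sum_lt_top.mpr fun i _ => ENNReal.ofReal_lt_top

/-- The law of `n` i.i.d. samples from `p`. -/
noncomputable def iidMeasure {d : ℕ} (p : Fin d → ℝ) (n : ℕ) :
    Measure (Fin n → Fin d) :=
  Measure.pi fun _ => discMeasure p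

/-- The empirical distribution of the sample `x`. -/
noncomputable def empDist {d n : ℕ} (x : Fin n → Fin d) : Fin d → ℝ :=
  fun i => ((Finset.univ.filter fun j => x j = i).card : ℝ) / n

/-- ℓ¹ distance between two vectors on `Fin d`. -/
noncomputable def l1Dist {d : ℕ} (p q : Fin d → ℝ) : ℝ :=
  ∑ i, |p i - q i|

/-! ### Auxiliary: measure computations -/

lemma discMeasure_singleton {d : ℕ} (p : Fin d → ℝ) (i : Fin d) :
    discMeasure p {i} = ENNReal.ofReal (p i) := by
  rw [discMeasure, withDensity_apply _ (measurableSet_singleton i),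
    lintegral_singleton, Measure.count_singleton, mul_one]

lemma iidMeasure_singleton {d n : ℕ} (p : Fin d → ℝ) (x : Fin n → Fin d) :
    iidMeasure p n {x} = ∏ j, ENNReal.ofReal (p (x j)) := by
  rw [iidMeasure, ← Set.univ_pi_singleton, Measure.pi_pi]
  simp [discMeasure_singleton]

lemma iidMeasure_finset {d n : ℕ} (p : Fin d → ℝ) (F : Finset (Fin n → Fin d)) :
    iidMeasure p n ↑F = ∑ x ∈ F, ∏ j, ENNReal.ofReal (p (x j)) := by
  have : (↑F : Set (Fin n → Fin d)) = ⋃ x ∈ F, {x} :=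
    (Set.biUnion_of_singleton (↑F : Set (Fin n → Fin d))).symm
  rw [this, measure_biUnion_finset]
  · simp [iidMeasure_singleton]
  · intro x _ y _ hxy
    simp [Set.disjoint_singleton, hxy]
  · intro x _; exact measurableSet_singleton x

lemma iidMeasure_finset' {d n : ℕ} (p : Fin d → ℝ) (hp : ∀ i, 0 ≤ p i)
    (F : Finset (Fin n → Fin d)) :
    iidMeasure p n ↑F = ENNReal.ofReal (∑ x ∈ F, ∏ j, p (x j)) := by
  rw [iidMeasure_finset, ENNReal.ofReal_sum_of_nonneg]
  · exact Finset.sum_congr rfl fun x _ => by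
      rw [← ENNReal.ofReal_prod_of_nonneg]; exact fun j _ => hp (x j)
  · exact fun x _ => Finset.prod_nonneg fun j _ => hp (x j)

/-! ### Auxiliary: analytic inequalities -/

lemma aux_log_lb {x : ℝ} (hx : 1 ≤ x) : 2*(x-1)/(x+1) ≤ Real.log x := by
  have key : MonotoneOn (fun x : ℝ => Real.log x - 2*(x-1)/(x+1)) (Set.Ici 1) := by
    have hD : ∀ y ∈ interior (Set.Ici (1:ℝ)),
        HasDerivAt (fun x : ℝ => Real.log x - 2*(x-1)/(x+1))
          (y⁻¹ - 4/(y+1)^2) y := by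
      intro y hy
      rw [interior_Ici] at hy
      have hy1 : (1:ℝ) < y := hy
      have hy0 : y ≠ 0 := by linarith
      have hyp1 : y + 1 ≠ 0 := by linarith
      have h1 : HasDerivAt Real.log y⁻¹ y := Real.hasDerivAt_log hy0
      have h2 : HasDerivAt (fun x : ℝ => 2*(x-1)/(x+1)) (4/(y+1)^2) y := by
        have h := (((hasDerivAt_id y).sub_const 1).const_mul 2).div
          ((hasDerivAt_id y).add_const 1) hyp1
        simp only [id_eq, mul_one] at h
        have e : (2 * (y + 1) - 2 * (y - 1)) / (y + 1)^2 = 4 / (y+1)^2 := by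
          congr 1; ring
        rw [e] at h
        exact h
      exact h1.sub h2
    apply monotoneOn_of_deriv_nonneg (convex_Ici 1)
    · apply ContinuousOn.sub
      · exact Real.continuousOn_log.mono (by intro y hy; simp at hy ⊢; linarith)
      · apply ContinuousOn.div
        · fun_prop
        · fun_prop
        · intro y hy
          simp only [Set.mem_Ici] at hy
          intro h; linarith
    · intro y hy
      exact (hD y hy).differentiableAt.differentiableWithinAt
    · intro y hy
      rw [(hD y hy).deriv]
      rw [interior_Ici] at hy
      have hy1 : (1:ℝ) < y := hy
      rw [sub_nonneg, div_le_iff₀ (by positivity), inv_mul_eq_div,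
        le_div_iff₀ (by linarith)]
      nlinarith
  have h0 := key (Set.self_mem_Ici) (by exact hx : x ∈ Set.Ici 1) hx
  norm_num at h0
  linarith

lemma aux_log_ub {y : ℝ} (hy : 1 ≤ y) : Real.log y ≤ (y - 1/y)/2 := by
  have key : MonotoneOn (fun y : ℝ => (y - 1/y)/2 - Real.log y) (Set.Ici 1) := by
    have hD : ∀ z ∈ interior (Set.Ici (1:ℝ)),
        HasDerivAt (fun y : ℝ => (y - 1/y)/2 - Real.log y)
          ((1 + 1/z^2) / 2 - z⁻¹) z := by
      intro z hz
      rw [interior_Ici] at hz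
      have hz1 : (1:ℝ) < z := hz
      have hz0 : z ≠ 0 := by linarith
      have h1 : HasDerivAt (fun y : ℝ => (y - 1/y)/2) ((1 + 1/z^2)/2) z := by
        have hi : HasDerivAt (fun y : ℝ => 1/y) (-(1/z^2)) z := by
          simpa [one_div] using (hasDerivAt_inv hz0)
        have h := ((hasDerivAt_id z).sub hi).div_const 2
        exact h.congr_deriv (by ring)
      have h2 : HasDerivAt Real.log z⁻¹ z := Real.hasDerivAt_log hz0
      exact h1.sub h2
    apply monotoneOn_of_deriv_nonneg (convex_Ici 1)
    · apply ContinuousOn.sub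
      · apply ContinuousOn.div_const
        apply ContinuousOn.sub continuousOn_id
        apply ContinuousOn.div continuousOn_const continuousOn_id
        intro y hy
        simp only [Set.mem_Ici] at hy
        intro h; simp only [id_eq] at h; linarith
      · exact Real.continuousOn_log.mono (by intro y hy; simp at hy ⊢; linarith)
    · intro z hz
      exact (hD z hz).differentiableAt.differentiableWithinAt
    · intro z hz
      rw [(hD z hz).deriv]
      rw [interior_Ici] at hz
      have hz1 : (1:ℝ) < z := hz
      have hz0 : (0:ℝ) < z := by linarith
      rw [sub_nonneg, inv_eq_one_div, div_le_div_iff₀ hz0 (by norm_num)]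
      have e : (1 + 1/z^2) * z = z + 1/z := by field_simp
      rw [e]
      have e2 : z + 1/z - 1*2 = (z-1)^2/z := by field_simp; ring
      have : (0:ℝ) ≤ (z-1)^2/z := by positivity
      linarith
  have h0 := key (Set.self_mem_Ici) (by exact hy : y ∈ Set.Ici 1) hy
  norm_num at h0
  rw [one_div]
  linarith

/-- Quadratic Gibbs inequality: `t ln(t/p) ≥ (t-p) + (t-p)²/2` for `t,p ∈ (0,1]`. -/
lemma gibbs_quad {t p : ℝ} (ht0 : 0 < t) (ht1 : t ≤ 1) (hp0 : 0 < p) (hp1 : p ≤ 1) :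
    (t - p) + (t - p)^2/2 ≤ t * Real.log (t/p) := by
  have hab : (0:ℝ) < t + p := by linarith
  rcases le_total p t with h | h
  · have hx : 1 ≤ t/p := (one_le_div hp0).2 h
    have h2 : t * (2*(t/p-1)/(t/p+1)) ≤ t * Real.log (t/p) :=
      mul_le_mul_of_nonneg_left (aux_log_lb hx) ht0.le
    have he : t * (2*(t/p-1)/(t/p+1)) = 2*t*(t-p)/(t+p) := by
      rw [div_add' _ _ _ hp0.ne', div_sub' hp0.ne']
      field_simp
    rw [he] at h2
    refine le_trans ?_ h2
    rw [le_div_iff₀ hab]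
    nlinarith [mul_nonneg (sq_nonneg (t-p)) (by linarith : (0:ℝ) ≤ 2 - (t+p))]
  · have hy : 1 ≤ p/t := (one_le_div ht0).2 h
    have hlog : Real.log (t/p) = - Real.log (p/t) := by
      rw [← Real.log_inv]; congr 1; rw [inv_div]
    have h2 : t * (-((p/t - 1/(p/t))/2)) ≤ t * Real.log (t/p) := by
      rw [hlog]
      exact mul_le_mul_of_nonneg_left (neg_le_neg (aux_log_ub hy)) ht0.le
    refine le_trans ?_ h2
    have he : t * (-((p/t - 1/(p/t))/2)) = (t^2 - p^2)/(2*p) := by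
      rw [one_div, inv_div]
      field_simp
      ring
    rw [he, le_div_iff₀ (by positivity : (0:ℝ) < 2*p)]
    nlinarith [mul_nonneg (sq_nonneg (t-p)) (by linarith : (0:ℝ) ≤ 1 - p)]

/-! ### Auxiliary: KL facts -/

lemma prob_le_one {d : ℕ} {p : Fin d → ℝ} (hp : IsProbDist p) (i : Fin d) : p i ≤ 1 := by
  rw [← hp.2]
  exact Finset.single_le_sum (fun j _ => hp.1 j) (mem_univ i)

lemma klDivReal_mul_log2 {d : ℕ} (T P : Fin d → ℝ) :
    klDivReal T P * Real.log 2 =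
      ∑ i, (if T i = 0 then 0 else T i * Real.log (T i / P i)) := by
  rw [klDivReal, Finset.sum_mul]
  refine Finset.sum_congr rfl fun i _ => ?_
  split_ifs with h
  · simp
  · rw [Real.logb, mul_assoc, div_mul_cancel₀]
    exact Real.log_ne_zero_of_pos_of_ne_one (by norm_num) (by norm_num)

lemma gibbs_term {d : ℕ} {T P : Fin d → ℝ} (hT : IsProbDist T) (hP : IsProbDist P)
    (hTP : ∀ i, P i = 0 → T i = 0) (i : Fin d) :
    (T i - P i) + (T i - P i)^2/2 ≤
      (if T i = 0 then 0 else T i * Real.log (T i / P i)) := by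
  rcases eq_or_lt_of_le (hT.1 i) with h0 | h0
  · rw [if_pos h0.symm, ← h0]
    have := prob_le_one hP i
    have := hP.1 i
    nlinarith
  · have hPi : 0 < P i := by
      rcases eq_or_lt_of_le (hP.1 i) with h | h
      · exact absurd (hTP i h.symm) h0.ne'
      · exact h
    rw [if_neg h0.ne']
    exact gibbs_quad h0 (prob_le_one hT i) hPi (prob_le_one hP i)

lemma klDivReal_nonneg {d : ℕ} {T P : Fin d → ℝ} (hT : IsProbDist T) (hP : IsProbDist P)
    (hTP : ∀ i, P i = 0 → T i = 0) : 0 ≤ klDivReal T P := by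
  have h := Finset.sum_le_sum (fun i (_ : i ∈ univ) => gibbs_term hT hP hTP i)
  rw [← klDivReal_mul_log2] at h
  have hsum : ∑ i, ((T i - P i) + (T i - P i)^2/2) =
      ∑ i, (T i - P i)^2/2 := by
    rw [Finset.sum_add_distrib, Finset.sum_sub_distrib, hT.2, hP.2]
    simp
  rw [hsum] at h
  have h2 : (0:ℝ) ≤ ∑ i, (T i - P i)^2/2 :=
    Finset.sum_nonneg fun i _ => by positivity
  nlinarith [Real.log_pos (by norm_num : (1:ℝ) < 2)]

lemma coord_close {d : ℕ} {T P : Fin d → ℝ} (hT : IsProbDist T) (hP : IsProbDist P)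
    (hTP : ∀ i, P i = 0 → T i = 0) (i : Fin d) :
    (T i - P i)^2/2 ≤ Real.log 2 * klDivReal T P := by
  have key : ∀ j, (T j - P j)^2/2 ≤
      (if T j = 0 then 0 else T j * Real.log (T j / P j)) - (T j - P j) := by
    intro j
    have := gibbs_term hT hP hTP j
    linarith
  calc (T i - P i)^2/2
      ≤ ∑ j, ((if T j = 0 then 0 else T j * Real.log (T j / P j)) - (T j - P j)) := by
        refine le_trans ?_ (Finset.sum_le_sum fun j (_ : j ∈ univ) => key j)
        exact Finset.single_le_sum (f := fun j => (T j - P j)^2/2)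
          (fun j _ => by positivity) (mem_univ i)
    _ = klDivReal T P * Real.log 2 := by
        rw [Finset.sum_sub_distrib, Finset.sum_sub_distrib, hT.2, hP.2,
          ← klDivReal_mul_log2]
        simp
    _ = Real.log 2 * klDivReal T P := mul_comm _ _

/-- Continuity lower bound for `klDivReal · Q` near `P`. -/
lemma kl_continuity {d : ℕ} {T P Q : Fin d → ℝ} (hT : IsProbDist T) (hP : IsProbDist P)
    (hQ : IsProbDist Q) (hTP : ∀ i, P i = 0 → T i = 0) (hPQ : ∀ i, Q i = 0 → P i = 0)
    {c : ℝ} (hc : klDivReal T P ≤ c) :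
    klDivReal P Q - (∑ i, |if P i = 0 then 0 else Real.logb 2 (P i / Q i)|) *
      Real.sqrt (2 * Real.log 2 * c) ≤ klDivReal T Q := by
  set w : Fin d → ℝ := fun i => if P i = 0 then 0 else Real.logb 2 (P i / Q i) with hw
  have hTQ : ∀ i, Q i = 0 → T i = 0 := fun i h => hTP i (hPQ i h)
  have hdecomp : klDivReal T Q = klDivReal T P + ∑ i, T i * w i := by
    rw [klDivReal, klDivReal, ← Finset.sum_add_distrib]
    refine Finset.sum_congr rfl fun i _ => ?_
    rcases eq_or_lt_of_le (hT.1 i) with h0 | h0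
    · rw [if_pos h0.symm, if_pos h0.symm, ← h0]
      ring
    · have hPi : 0 < P i := (hP.1 i).lt_of_ne fun h => h0.ne' (hTP i h.symm)
      have hQi : 0 < Q i := (hQ.1 i).lt_of_ne fun h => hPi.ne' (hPQ i h.symm)
      rw [if_neg h0.ne', if_neg h0.ne', hw]
      simp only [if_neg hPi.ne']
      rw [Real.logb, Real.logb, Real.logb, Real.log_div h0.ne' hQi.ne',
        Real.log_div h0.ne' hPi.ne', Real.log_div hPi.ne' hQi.ne']
      ring
  have hPdecomp : klDivReal P Q = ∑ i, P i * w i := by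
    rw [klDivReal]
    refine Finset.sum_congr rfl fun i _ => ?_
    rcases eq_or_lt_of_le (hP.1 i) with h0 | h0
    · rw [if_pos h0.symm, hw]; simp [← h0]
    · rw [if_neg h0.ne', hw]; simp [if_neg h0.ne']
  have hc0 : 0 ≤ c := le_trans (klDivReal_nonneg hT hP hTP) hc
  have hbound : ∀ i, |T i - P i| ≤ Real.sqrt (2 * Real.log 2 * c) := by
    intro i
    have h1 := coord_close hT hP hTP i
    have h2 : (T i - P i)^2 ≤ 2 * Real.log 2 * c := by
      have hl2 : (0:ℝ) < Real.log 2 := Real.log_pos (by norm_num)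
      nlinarith [mul_le_mul_of_nonneg_left hc hl2.le]
    calc |T i - P i| = Real.sqrt ((T i - P i)^2) := (Real.sqrt_sq_eq_abs _).symm
      _ ≤ Real.sqrt (2 * Real.log 2 * c) := Real.sqrt_le_sqrt h2
  have hsum : |∑ i, (T i - P i) * w i| ≤
      (∑ i, |w i|) * Real.sqrt (2 * Real.log 2 * c) := by
    calc |∑ i, (T i - P i) * w i| ≤ ∑ i, |(T i - P i) * w i| :=
          Finset.abs_sum_le_sum_abs _ _
      _ ≤ ∑ i, Real.sqrt (2 * Real.log 2 * c) * |w i| := by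
          refine Finset.sum_le_sum fun i _ => ?_
          rw [abs_mul]
          exact mul_le_mul_of_nonneg_right (hbound i) (abs_nonneg _)
      _ = (∑ i, |w i|) * Real.sqrt (2 * Real.log 2 * c) := by
          rw [Finset.sum_mul]
          exact Finset.sum_congr rfl fun i _ => mul_comm _ _
  have hTP0 : 0 ≤ klDivReal T P := klDivReal_nonneg hT hP hTP
  have hdiff : ∑ i, T i * w i = ∑ i, P i * w i + ∑ i, (T i - P i) * w i := by
    rw [← Finset.sum_add_distrib]
    exact Finset.sum_congr rfl fun i _ => by ring
  rw [hdecomp, hdiff, ← hPdecomp]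
  have := abs_le.1 hsum
  linarith [this.1]

/-! ### Auxiliary: method of types -/

/-- counts -/
def cnt {d n : ℕ} (x : Fin n → Fin d) (i : Fin d) : ℕ :=
  (Finset.univ.filter fun j => x j = i).card

lemma empDist_eq {d n : ℕ} (x : Fin n → Fin d) (i : Fin d) :
    empDist x i = (cnt x i : ℝ) / n := rfl

lemma sum_cnt {d n : ℕ} (x : Fin n → Fin d) : ∑ i, cnt x i = n := by
  simp only [cnt]
  have := (Finset.card_eq_sum_card_fiberwise
    (f := x) (s := univ) (t := univ) fun j _ => mem_univ (x j)).symm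
  rw [this, Finset.card_univ, Fintype.card_fin]

lemma empDist_isProbDist {d n : ℕ} (hn : 0 < n) (x : Fin n → Fin d) :
    IsProbDist (empDist x) := by
  constructor
  · intro i; rw [empDist_eq]; positivity
  · simp only [empDist_eq]
    rw [← Finset.sum_div]
    rw [show ∑ i, (cnt x i : ℝ) = ((∑ i, cnt x i : ℕ) : ℝ) by push_cast; ring,
      sum_cnt]
    field_simp

lemma empDist_eq_zero_iff {d n : ℕ} (hn : 0 < n) (x : Fin n → Fin d) (i : Fin d) :
    empDist x i = 0 ↔ cnt x i = 0 := by
  rw [empDist_eq, div_eq_zero_iff]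
  constructor
  · rintro (h | h)
    · exact_mod_cast h
    · exact absurd h (by positivity)
  · intro h; left; exact_mod_cast h

/-- products over samples group into products over letters -/
lemma prod_comp_cnt {d n : ℕ} (x : Fin n → Fin d) (f : Fin d → ℝ) :
    ∏ j, f (x j) = ∏ i, f i ^ cnt x i := by
  rw [← Finset.prod_fiberwise_of_maps_to (g := x) (fun j _ => mem_univ (x j))
    (fun j => f (x j))]
  refine Finset.prod_congr rfl fun i _ => ?_
  rw [show ∏ j ∈ univ.filter fun j => x j = i, f (x j)
      = ∏ j ∈ univ.filter fun j => x j = i, f i from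
    Finset.prod_congr rfl fun j hj => by rw [(mem_filter.1 hj).2]]
  rw [Finset.prod_const, cnt]

/-- base-2 exponential of a finite sum -/
lemma two_rpow_sum {α : Type*} (s : Finset α) (f : α → ℝ) :
    (2:ℝ) ^ (∑ i ∈ s, f i) = ∏ i ∈ s, (2:ℝ) ^ (f i) := by
  rw [Real.rpow_def_of_pos (by norm_num), Finset.mul_sum, Real.exp_sum]
  exact Finset.prod_congr rfl fun i _ => (Real.rpow_def_of_pos (by norm_num) _).symm

/-- Key identity: probability of a sequence in terms of its type. -/
lemma prod_Q_eq {d n : ℕ} (hn : 0 < n) (x : Fin n → Fin d) (Q : Fin d → ℝ)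
    (hQ0 : ∀ i, 0 ≤ Q i)
    (hsupp : ∀ i, Q i = 0 → empDist x i = 0) :
    ∏ j, Q (x j) =
      (∏ i, (empDist x i) ^ cnt x i) * (2:ℝ) ^ (-(n:ℝ) * klDivReal (empDist x) Q) := by
  set T := empDist x with hT
  have hexp : -(n:ℝ) * klDivReal T Q =
      ∑ i, (if T i = 0 then 0 else (cnt x i : ℝ) * Real.logb 2 (Q i / T i)) := by
    rw [klDivReal, Finset.mul_sum]
    refine Finset.sum_congr rfl fun i _ => ?_
    split_ifs with h
    · simp
    · have hTi : 0 < T i := lt_of_le_of_ne ((empDist_isProbDist hn x).1 i) (Ne.symm h)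
      have hQi : 0 < Q i := by
        rcases (hQ0 i).lt_or_eq with h' | h'
        · exact h'
        · exact absurd (hsupp i h'.symm) h
      have hcnt : (cnt x i : ℝ) = n * T i := by
        rw [hT, empDist_eq]; field_simp
      rw [hcnt, Real.logb, Real.logb, Real.log_div hQi.ne' hTi.ne',
        Real.log_div hTi.ne' hQi.ne']
      ring
  rw [hexp, two_rpow_sum, prod_comp_cnt, ← Finset.prod_mul_distrib]
  refine Finset.prod_congr rfl fun i _ => ?_
  by_cases h : T i = 0
  · have hc : cnt x i = 0 := (empDist_eq_zero_iff hn x i).1 h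
    rw [if_pos h, hc]
    simp
  · have hTi : 0 < T i := lt_of_le_of_ne ((empDist_isProbDist hn x).1 i) (Ne.symm h)
    have hQi : 0 < Q i := by
      rcases (hQ0 i).lt_or_eq with h' | h'
      · exact h'
      · exact absurd (hsupp i h'.symm) h
    rw [if_neg h]
    rw [show (cnt x i : ℝ) * Real.logb 2 (Q i / T i)
        = Real.logb 2 (Q i / T i) * (cnt x i : ℝ) from mul_comm _ _]
    rw [Real.rpow_mul (by norm_num : (0:ℝ) ≤ 2), Real.rpow_logb (by norm_num)
      (by norm_num) (by positivity), Real.rpow_natCast]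
    rw [div_pow, mul_div_cancel₀]
    positivity

lemma cnt_le {d n : ℕ} (x : Fin n → Fin d) (i : Fin d) : cnt x i ≤ n := by
  rw [cnt]
  exact le_trans (Finset.card_filter_le _ _) (le_of_eq (by simp))

lemma sum_type_prob_le {d n : ℕ} (hn : 0 < n) :
    ∑ x : Fin n → Fin d, ∏ i, (empDist x i) ^ cnt x i ≤ ((n+1 : ℝ)) ^ d := by
  classical
  set K := Finset.image (fun x : Fin n → Fin d => cnt x) univ with hK
  rw [← Finset.sum_fiberwise_of_maps_to
    (fun x (_ : x ∈ univ) => mem_image_of_mem (fun x => cnt x) (mem_univ x))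
    (fun x => ∏ i, (empDist x i) ^ cnt x i)]
  have hinner : ∀ k ∈ K,
      ∑ x ∈ univ.filter (fun x : Fin n → Fin d => cnt x = k),
        ∏ i, (empDist x i) ^ cnt x i ≤ 1 := by
    intro k hk
    obtain ⟨x₀, _, hx₀⟩ := Finset.mem_image.1 hk
    have hks : ∑ i, k i = n := by rw [← hx₀]; exact sum_cnt x₀
    set f : Fin d → ℝ := fun i => (k i : ℝ) / n with hf
    have step1 : ∀ x ∈ univ.filter (fun x : Fin n → Fin d => cnt x = k),
        ∏ i, (empDist x i) ^ cnt x i = ∏ j, f (x j) := by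
      intro x hx
      have hcx : cnt x = k := (mem_filter.1 hx).2
      rw [prod_comp_cnt]
      refine Finset.prod_congr rfl fun i _ => ?_
      rw [empDist_eq, hcx, hf]
    rw [Finset.sum_congr rfl step1]
    have step2 : ∑ x ∈ univ.filter (fun x : Fin n → Fin d => cnt x = k), ∏ j, f (x j)
        ≤ ∑ x : Fin n → Fin d, ∏ j, f (x j) := by
      refine Finset.sum_le_sum_of_subset_of_nonneg (Finset.filter_subset _ _)
        fun x _ _ => Finset.prod_nonneg fun j _ => ?_
      rw [hf]; positivity
    refine le_trans step2 ?_
    have step3 : ∑ x : Fin n → Fin d, ∏ j, f (x j) = ∏ j : Fin n, ∑ i, f i := by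
      rw [Finset.prod_univ_sum (fun _ => univ) (fun _ i => f i)]
      rw [Fintype.piFinset_univ]
    rw [step3]
    have : ∑ i, f i = 1 := by
      rw [hf, ← Finset.sum_div,
        show ∑ i, (k i : ℝ) = ((∑ i, k i : ℕ) : ℝ) by push_cast; ring, hks]
      field_simp
    rw [this]
    simp
  refine le_trans (Finset.sum_le_sum hinner) ?_
  have hKcard : ∑ _k ∈ K, (1:ℝ) = (K.card : ℝ) := by rw [Finset.sum_const]; simp
  rw [hKcard]
  · have hcard : K.card ≤ (n+1)^d := by
      have hinj : Set.InjOn (fun k : Fin d → ℕ => fun i => (⟨min (k i) n, by omega⟩ : Fin (n+1)))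
          ↑K := by
        intro k hk k' hk' h
        obtain ⟨x, _, hx⟩ := Finset.mem_image.1 hk
        obtain ⟨x', _, hx'⟩ := Finset.mem_image.1 hk'
        funext i
        have h1 : min (k i) n = k i := min_eq_left (by rw [← hx]; exact cnt_le x i)
        have h2 : min (k' i) n = k' i := min_eq_left (by rw [← hx']; exact cnt_le x' i)
        have := congrFun h i
        rw [Fin.mk.injEq] at this
        rw [← h1, ← h2]
        exact this
      calc K.card ≤ (univ : Finset (Fin d → Fin (n+1))).card :=
            Finset.card_le_card_of_injOn _ (fun k _ => mem_univ _) hinj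
        _ = (n+1)^d := by rw [Finset.card_univ, Fintype.card_fun]; simp
    calc (K.card : ℝ) ≤ (((n+1)^d : ℕ) : ℝ) := by exact_mod_cast hcard
      _ = ((n+1:ℝ))^d := by push_cast; ring

/-! ### Auxiliary: asymptotics -/

lemma tendsto_logb_div : Tendsto (fun n : ℕ => Real.logb 2 (n+1) / n) atTop (nhds 0) := by
  have h1 : Tendsto (fun x : ℝ => Real.log x / x) atTop (nhds 0) :=
    Real.isLittleO_log_id_atTop.tendsto_div_nhds_zero
  have h2 : Tendsto (fun n : ℕ => ((n:ℝ)+1)) atTop atTop :=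
    tendsto_atTop_add_const_right _ 1 tendsto_natCast_atTop_atTop
  have h3 : Tendsto (fun n : ℕ => Real.log ((n:ℝ)+1) / ((n:ℝ)+1)) atTop (nhds 0) :=
    h1.comp h2
  have h4 : Tendsto (fun n : ℕ => ((n:ℝ)+1) / n) atTop (nhds 1) := by
    have : (fun n : ℕ => ((n:ℝ)+1) / n) =ᶠ[atTop] fun n : ℕ => 1 + 1/(n:ℝ) := by
      filter_upwards [eventually_gt_atTop 0] with n hn
      have : (n:ℝ) ≠ 0 := by positivity
      field_simp
    rw [tendsto_congr' this]
    have : Tendsto (fun n : ℕ => 1 / (n:ℝ)) atTop (nhds 0) := tendsto_one_div_atTop_nhds_zero_nat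
    have h := tendsto_const_nhds (x := (1:ℝ)) (f := atTop (α := ℕ)) |>.add this
    simpa using h
  have h5 : Tendsto (fun n : ℕ => Real.log ((n:ℝ)+1) / ((n:ℝ)+1) * (((n:ℝ)+1)/n))
      atTop (nhds 0) := by
    have := h3.mul h4
    simpa using this
  have heq : (fun n : ℕ => Real.logb 2 (n+1) / n) =ᶠ[atTop]
      fun n : ℕ => (Real.log ((n:ℝ)+1) / ((n:ℝ)+1) * (((n:ℝ)+1)/n)) / Real.log 2 := by
    filter_upwards [eventually_gt_atTop 0] with n hn
    have hn0 : (n:ℝ) ≠ 0 := by positivity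
    have hn1 : ((n:ℝ)+1) ≠ 0 := by positivity
    have e1 : Real.log ((n:ℝ)+1)/((n:ℝ)+1) * (((n:ℝ)+1)/n) = Real.log ((n:ℝ)+1)/n := by
      field_simp
    rw [e1, Real.logb]
    ring
  rw [tendsto_congr' heq]
  simpa using h5.div_const (Real.log 2)

/-! ### Main theorem -/

/-- the type II error exponent of Hoeffding's test is at least
`D(P‖Q)`: `liminf -(1/n) log₂ βₙ ≥ D(P‖Q)`, where `βₙ = Pr[D(Q̂ₙ‖P) ≤ cₙ]`
under `Xⁿ` i.i.d. from `Q`.  (`-(1/n) log₂ β = (-(1/(n ln 2))) · ln β`, with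
`ENNReal.log` the natural log taking value `⊥` at `0`.) -/
theorem hoeffding_typeII_exponent {d : ℕ} (P Q : Fin d → ℝ)
    (hP : IsProbDist P) (hQ : IsProbDist Q) (hne : P ≠ Q)
    (hPQ : ∀ i, Q i = 0 → P i = 0)
    (C : ℝ) (hC : 0 < C) (c : ℕ → ℝ)
    (hc : ∀ n : ℕ, c n = d * Real.logb 2 (n + 1) / n + C / n) :
    ((klDivReal P Q : ℝ) : EReal) ≤
      Filter.atTop.liminf (fun n : ℕ =>
        (((-1 : ℝ) / (n * Real.log 2) : ℝ) : EReal) *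
          ENNReal.log (iidMeasure Q n {x | klDiv (empDist x) P ≤ ((c n : ℝ) : EReal)})) := by
  classical
  have hl2 : (0:ℝ) < Real.log 2 := Real.log_pos (by norm_num)
  set D : ℝ := klDivReal P Q with hD
  set W : ℝ := ∑ i, |if P i = 0 then 0 else Real.logb 2 (P i / Q i)| with hW
  set E : ℕ → ℝ := fun n => W * Real.sqrt (2 * Real.log 2 * c n) with hE
  set A : ℕ → ℝ := fun n => D - E n - d * Real.logb 2 (n+1) / n with hA
  -- Step I: eventual pointwise bound
  have key : ∀ᶠ n in atTop, ((A n : ℝ) : EReal) ≤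
      (((-1 : ℝ) / (n * Real.log 2) : ℝ) : EReal) *
        ENNReal.log (iidMeasure Q n {x | klDiv (empDist x) P ≤ ((c n : ℝ) : EReal)}) := by
    filter_upwards [eventually_ge_atTop 1] with n hn1
    have hn : 0 < n := hn1
    have hnR : (0:ℝ) < n := by exact_mod_cast hn
    set F : Finset (Fin n → Fin d) :=
      univ.filter (fun x => klDiv (empDist x) P ≤ ((c n : ℝ) : EReal)) with hF
    have hset : {x : Fin n → Fin d | klDiv (empDist x) P ≤ ((c n : ℝ) : EReal)} = ↑F := by
      rw [hF]; ext x; simp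
    set B : ℝ := ∑ x ∈ F, ∏ j, Q (x j) with hB
    have hμ : iidMeasure Q n {x | klDiv (empDist x) P ≤ ((c n : ℝ) : EReal)}
        = ENNReal.ofReal B := by
      rw [hset, iidMeasure_finset' Q hQ.1]
    have hB0 : 0 ≤ B :=
      Finset.sum_nonneg fun x _ => Finset.prod_nonneg fun j _ => hQ.1 (x j)
    -- the Sanov bound
    have hBR : B ≤ ((n:ℝ)+1)^d * (2:ℝ) ^ (-(n:ℝ) * (D - E n)) := by
      have hterm : ∀ x ∈ F, ∏ j, Q (x j) ≤
          (∏ i, (empDist x i) ^ cnt x i) * (2:ℝ) ^ (-(n:ℝ) * (D - E n)) := by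
        intro x hx
        have hmem : klDiv (empDist x) P ≤ ((c n : ℝ) : EReal) := (mem_filter.1 hx).2
        have hsuppP : ∀ i, P i = 0 → empDist x i = 0 := by
          by_contra hcon
          rw [klDiv, if_neg hcon] at hmem
          exact absurd hmem (by simp)
        have hkl : klDivReal (empDist x) P ≤ c n := by
          rw [klDiv, if_pos hsuppP] at hmem
          exact_mod_cast hmem
        have hT : IsProbDist (empDist x) := empDist_isProbDist hn x
        have hcont := kl_continuity hT hP hQ hsuppP hPQ hkl
        rw [← hW, ← hD] at hcont
        have hsuppQ : ∀ i, Q i = 0 → empDist x i = 0 := fun i h => hsuppP i (hPQ i h)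
        rw [prod_Q_eq hn x Q hQ.1 hsuppQ]
        refine mul_le_mul_of_nonneg_left ?_
          (Finset.prod_nonneg fun i _ => by
            have := hT.1 i; positivity)
        apply Real.rpow_le_rpow_of_exponent_le (by norm_num)
        have hEn : D - E n ≤ klDivReal (empDist x) Q := by
          rw [hE]; exact hcont
        nlinarith
      calc B ≤ ∑ x ∈ F, (∏ i, (empDist x i) ^ cnt x i) * (2:ℝ) ^ (-(n:ℝ) * (D - E n)) :=
            Finset.sum_le_sum hterm
        _ = (∑ x ∈ F, ∏ i, (empDist x i) ^ cnt x i) * (2:ℝ) ^ (-(n:ℝ) * (D - E n)) := by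
            rw [Finset.sum_mul]
        _ ≤ (∑ x : Fin n → Fin d, ∏ i, (empDist x i) ^ cnt x i) *
              (2:ℝ) ^ (-(n:ℝ) * (D - E n)) := by
            refine mul_le_mul_of_nonneg_right ?_ (by positivity)
            refine Finset.sum_le_sum_of_subset_of_nonneg (Finset.subset_univ _)
              fun x _ _ => Finset.prod_nonneg fun i _ => ?_
            have := (empDist_isProbDist hn x).1 i; positivity
        _ ≤ ((n:ℝ)+1)^d * (2:ℝ) ^ (-(n:ℝ) * (D - E n)) :=
            mul_le_mul_of_nonneg_right (sum_type_prob_le hn) (by positivity)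
    rcases eq_or_lt_of_le hB0 with hBz | hBpos
    · have hneg : (-1:ℝ)/((n:ℝ)*Real.log 2) < 0 := by
        apply div_neg_of_neg_of_pos
        · norm_num
        · positivity
      rw [hμ, ← hBz, ENNReal.ofReal_zero, ENNReal.log_zero,
        EReal.coe_mul_bot_of_neg hneg]
      exact le_top
    · rw [hμ, ENNReal.log_ofReal_of_pos hBpos, ← EReal.coe_mul, EReal.coe_le_coe_iff]
      have hRpos : (0:ℝ) < ((n:ℝ)+1)^d * (2:ℝ) ^ (-(n:ℝ) * (D - E n)) := by positivity
      have hlogB : Real.log B ≤ Real.log (((n:ℝ)+1)^d * (2:ℝ) ^ (-(n:ℝ) * (D - E n))) :=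
        Real.log_le_log hBpos hBR
      rw [Real.log_mul (by positivity) (by positivity), Real.log_pow,
        Real.log_rpow (by norm_num)] at hlogB
      have hcoef : (-1:ℝ) / (n * Real.log 2) ≤ 0 := by
        apply div_nonpos_of_nonpos_of_nonneg <;> [norm_num; positivity]
      have hmul := mul_le_mul_of_nonpos_left hlogB hcoef
      refine le_trans (le_of_eq ?_) hmul
      have hAn : A n = D - E n - d * Real.logb 2 ((n:ℝ)+1) / n := rfl
      rw [hAn, ← Real.log_div_log]
      have hn0 : (n:ℝ) ≠ 0 := hnR.ne'
      field_simp
      ring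
  -- Step II: A n → D
  have hAtendsto : Tendsto A atTop (nhds D) := by
    have hcz : Tendsto c atTop (nhds 0) := by
      have h1 : Tendsto (fun n : ℕ => (d:ℝ) * (Real.logb 2 (n+1) / n)) atTop (nhds 0) := by
        simpa using tendsto_logb_div.const_mul (d:ℝ)
      have h2 : Tendsto (fun n : ℕ => C / n) atTop (nhds 0) :=
        tendsto_const_div_atTop_nhds_zero_nat C
      have := h1.add h2
      rw [tendsto_congr' ?_]
      · simpa using this
      · filter_upwards with n
        rw [hc n]
        ring
    have hEz : Tendsto E atTop (nhds 0) := by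
      have hs : Tendsto (fun n => Real.sqrt (2 * Real.log 2 * c n)) atTop (nhds 0) := by
        have h1 : Tendsto (fun n => 2 * Real.log 2 * c n) atTop (nhds 0) := by
          simpa using (hcz.const_mul (2 * Real.log 2))
        have := (Real.continuous_sqrt.tendsto 0).comp h1
        simpa [Function.comp_def] using this
      simpa using hs.const_mul W
    have hlb : Tendsto (fun n : ℕ => (d:ℝ) * (Real.logb 2 (n+1) / n)) atTop (nhds 0) := by
      simpa using tendsto_logb_div.const_mul (d:ℝ)
    have := (tendsto_const_nhds (x := D) (f := atTop (α := ℕ))).sub hEz |>.sub hlb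
    rw [tendsto_congr' ?_]
    · simpa using this
    · filter_upwards with n
      rw [hA]
      ring
  -- Step III: conclusion
  have hliminf : Filter.atTop.liminf (fun n : ℕ => ((A n : ℝ) : EReal)) = ((D : ℝ) : EReal) := by
    have : Tendsto (fun n : ℕ => ((A n : ℝ) : EReal)) atTop (nhds ((D : ℝ) : EReal)) :=
      EReal.tendsto_coe.2 hAtendsto
    exact this.liminf_eq
  refine le_trans (le_of_eq hliminf.symm) (Filter.liminf_le_liminf key)
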